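/- Let f₁,...,f_M : ℝ → ℝ be contractions with common constant α < 1, let P ≤ M be a positive integer, and set n̄ = 1 + (n mod P). Then every solution of x_n = ½(max_{1≤i≤M}{f_i(x_{n-i})} − n̄-rank_{1≤i≤M}{f_i(x_{n-i})}) converges to a unique P-periodic orbit independent of the initial condition. -/

import Mathlib

open List

noncomputable def krank (M k : ℕ) (v : Fin M → ℝ) : ℝ :=
  ((List.ofFn v).insertionSort (· ≥ ·)).getD (k - 1) 0

lemma sorted_countP_lower {a : List ℝ} (ha : a.Pairwise (· ≥ ·)) {j : ℕ} (hj : j < a.length)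
    {β : ℝ} (hβ : β < a[j]) : j + 1 ≤ a.countP (fun t => decide (β < t)) := by
  conv_rhs => rw [← take_append_drop (j+1) a, countP_append]
  have h1 : (a.take (j+1)).countP (fun t => decide (β < t)) = (a.take (j+1)).length := by
    rw [countP_eq_length]
    intro t ht
    rw [mem_take_iff_getElem] at ht
    obtain ⟨i, hm, rfl⟩ := ht
    simp only [decide_eq_true_eq]
    rcases lt_or_eq_of_le (Nat.lt_succ_iff.mp (lt_of_lt_of_le hm inf_le_left)) with h | h
    · have := ha.rel_get_of_lt (a := ⟨i, lt_of_lt_of_le hm inf_le_right⟩) (b := ⟨j, hj⟩) h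
      simp only [get_eq_getElem] at this
      exact lt_of_lt_of_le hβ this
    · subst h; exact hβ
  have h2 : (a.take (j+1)).length = j + 1 := by
    rw [length_take]; omega
  omega

lemma sorted_countP_upper {b : List ℝ} (hb : b.Pairwise (· ≥ ·)) {j : ℕ} (hj : j < b.length)
    {β : ℝ} (hβ : b[j] ≤ β) : b.countP (fun t => decide (β < t)) ≤ j := by
  conv_lhs => rw [← take_append_drop j b, countP_append]
  have h1 : (b.take j).countP (fun t => decide (β < t)) ≤ j := by
    calc _ ≤ (b.take j).length := countP_le_length
    _ ≤ j := by rw [length_take]; omega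
  have h2 : (b.drop j).countP (fun t => decide (β < t)) = 0 := by
    rw [countP_eq_zero]
    intro t ht
    rw [mem_drop_iff_getElem] at ht
    obtain ⟨i, hm, rfl⟩ := ht
    simp only [decide_eq_true_eq, not_lt]
    refine le_trans ?_ hβ
    rcases Nat.eq_or_lt_of_le (Nat.le_add_right j i) with h | h
    · exact le_of_eq (by congr 1; omega)
    · have := hb.rel_get_of_lt (a := ⟨j, hj⟩) (b := ⟨j + i, by omega⟩) h
      simpa using this
  omega

lemma krank_mono {M k : ℕ} (hj : k - 1 < M) {v w : Fin M → ℝ} (h : ∀ i, v i ≤ w i) :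
    krank M k v ≤ krank M k w := by
  classical
  set a := (List.ofFn v).insertionSort (· ≥ ·) with hadef
  set b := (List.ofFn w).insertionSort (· ≥ ·) with hbdef
  have hla : a.length = M := by rw [hadef, length_insertionSort, length_ofFn]
  have hlb : b.length = M := by rw [hbdef, length_insertionSort, length_ofFn]
  have hja : k - 1 < a.length := by omega
  have hjb : k - 1 < b.length := by omega
  rw [krank, krank, ← hadef, ← hbdef, getD_eq_getElem a 0 hja, getD_eq_getElem b 0 hjb]
  by_contra hlt
  push_neg at hlt
  set β := b[k-1] with hβdef
  have c1 : (k-1) + 1 ≤ a.countP (fun t => decide (β < t)) :=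
    sorted_countP_lower (pairwise_insertionSort _ _) hja hlt
  have c2 : b.countP (fun t => decide (β < t)) ≤ k - 1 :=
    sorted_countP_upper (pairwise_insertionSort _ _) hjb le_rfl
  have e1 : a.countP (fun t => decide (β < t)) = (List.ofFn v).countP (fun t => decide (β < t)) :=
    (perm_insertionSort _ _).countP_eq _
  have e2 : b.countP (fun t => decide (β < t)) = (List.ofFn w).countP (fun t => decide (β < t)) :=
    (perm_insertionSort _ _).countP_eq _
  have e3 : (List.ofFn v).countP (fun t => decide (β < t)) ≤
      (List.ofFn w).countP (fun t => decide (β < t)) := by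
    rw [List.ofFn_eq_map, List.ofFn_eq_map, countP_map, countP_map]
    apply countP_mono_left
    intro x _ hx
    simp only [Function.comp_apply, decide_eq_true_eq] at hx ⊢
    exact lt_of_lt_of_le hx (h x)
  omega

lemma krank_add_const {M k : ℕ} (hj : k - 1 < M) (v : Fin M → ℝ) (c : ℝ) :
    krank M k (fun i => v i + c) = krank M k v + c := by
  have hmap : (List.ofFn fun i => v i + c) = (List.ofFn v).map (· + c) := by
    rw [map_ofFn]; rfl
  have hsort : ((List.ofFn v).map (· + c)).insertionSort (· ≥ ·)
      = ((List.ofFn v).insertionSort (· ≥ ·)).map (· + c) := by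
    exact (fun {l₁ l₂ : List ℝ} (hp : l₁ ~ l₂) (h1 : l₁.Pairwise (· ≥ ·))
        (h2 : l₂.Pairwise (· ≥ ·)) => Perm.eq_of_pairwise' h1 h2 hp)
      ((perm_insertionSort _ _).trans ((perm_insertionSort _ _).symm.map _))
      (pairwise_insertionSort _ _)
      (List.Pairwise.map (R := (· ≥ ·)) (· + c) (fun a b hab => by
        simpa using add_le_add_right hab c)
        (pairwise_insertionSort (· ≥ ·) (List.ofFn v)))
  have hla : ((List.ofFn v).insertionSort (· ≥ ·)).length = M := by
    rw [length_insertionSort, length_ofFn]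
  have hj1 : k - 1 < ((List.ofFn v).insertionSort (· ≥ ·)).length := by omega
  have hj2 : k - 1 < (((List.ofFn v).insertionSort (· ≥ ·)).map (· + c)).length := by
    rw [length_map]; omega
  rw [krank, krank, hmap, hsort, getD_eq_getElem _ 0 hj2, getD_eq_getElem _ 0 hj1, getElem_map]

lemma krank_lipschitz {M k : ℕ} (hj : k - 1 < M) {v w : Fin M → ℝ} {c : ℝ}
    (h : ∀ i, |v i - w i| ≤ c) : |krank M k v - krank M k w| ≤ c := by
  rw [abs_sub_le_iff]
  constructor
  · have h1 : krank M k v ≤ krank M k w + c := by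
      rw [← krank_add_const hj w c]
      exact krank_mono hj (fun i => by have := (abs_sub_le_iff.mp (h i)).1; linarith)
    linarith
  · have h1 : krank M k w ≤ krank M k v + c := by
      rw [← krank_add_const hj v c]
      exact krank_mono hj (fun i => by have := (abs_sub_le_iff.mp (h i)).2; linarith)
    linarith

noncomputable def sol (M : ℕ) (G : ℕ → (Fin M → ℝ) → ℝ) : ℕ → ℝ
  | n => if _ : n < M then 0 else G n (fun i : Fin M => sol M G (n - 1 - (i : ℕ)))
decreasing_by
  rename_i h
  have := i.isLt
  omega

lemma sol_spec (M : ℕ) (G : ℕ → (Fin M → ℝ) → ℝ) (n : ℕ) (h : M ≤ n) :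
    sol M G n = G n (fun i : Fin M => sol M G (n - 1 - (i : ℕ))) := by
  rw [sol, dif_neg (by omega)]

open Filter in
theorem max_minus_rank_periodic (M P : ℕ) (hP : 1 ≤ P) (hPM : P ≤ M)
    (α : ℝ) (hα : α < 1)
    (f : Fin M → ℝ → ℝ)
    (hcon : ∀ i (x y : ℝ), |f i x - f i y| ≤ α * |x - y|) :
    ∃! xs : ℕ → ℝ,
      (∀ n, xs (n + P) = xs n) ∧
      (∀ x : ℕ → ℝ,
        (∀ n, M ≤ n → x n = (1 / 2) *
          (krank M 1 (fun i : Fin M => f i (x (n - 1 - (i : ℕ)))) -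
           krank M (1 + n % P) (fun i : Fin M => f i (x (n - 1 - (i : ℕ)))))) →
        Filter.Tendsto (fun n => x n - xs n) Filter.atTop (nhds 0)) := by
  have hM : 1 ≤ M := le_trans hP hPM
  set G : ℕ → (Fin M → ℝ) → ℝ := fun n u => (1 / 2) *
    (krank M 1 (fun i : Fin M => f i (u i)) -
     krank M (1 + n % P) (fun i : Fin M => f i (u i))) with hG
  set Sol : (ℕ → ℝ) → Prop :=
    fun x => ∀ n, M ≤ n → x n = G n (fun i : Fin M => x (n - 1 - (i : ℕ))) with hSol
  -- α is nonnegative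
  have hα0 : 0 ≤ α := by
    have h1 := hcon ⟨0, hM⟩ 0 1
    have h2 : (0:ℝ) ≤ |f ⟨0, hM⟩ 0 - f ⟨0, hM⟩ 1| := abs_nonneg _
    have h3 : |(0:ℝ) - 1| = 1 := by norm_num
    rw [h3, mul_one] at h1
    linarith
  have hk1 : (1:ℕ) - 1 < M := by omega
  have hk2 : ∀ n, (1 + n % P) - 1 < M := fun n => by
    have := Nat.mod_lt n (show 0 < P by omega); omega
  -- G is a contraction in the sup sense
  have hGlip : ∀ n (u u' : Fin M → ℝ) (c : ℝ), (∀ i, |u i - u' i| ≤ c) →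
      |G n u - G n u'| ≤ α * c := by
    intro n u u' c hc
    have hfc : ∀ i : Fin M, |f i (u i) - f i (u' i)| ≤ α * c := fun i =>
      le_trans (hcon i (u i) (u' i)) (mul_le_mul_of_nonneg_left (hc i) hα0)
    have h1 := krank_lipschitz (v := fun i : Fin M => f i (u i))
      (w := fun i : Fin M => f i (u' i)) hk1 hfc
    have h2 := krank_lipschitz (v := fun i : Fin M => f i (u i))
      (w := fun i : Fin M => f i (u' i)) (hk2 n) hfc
    rw [abs_sub_le_iff] at h1 h2 ⊢
    simp only [hG]
    constructor <;> nlinarith [h1.1, h1.2, h2.1, h2.2]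
  -- two-solution contraction estimate
  have key : ∀ x y : ℕ → ℝ, Sol x → Sol y → ∀ C, 0 ≤ C → (∀ m, m < M → |x m - y m| ≤ C) →
      ∀ n, |x n - y n| ≤ C * α ^ (n / M) := by
    intro x y hx hy C hC0 hCin n
    induction n using Nat.strong_induction_on with
    | _ n ih =>
      by_cases hn : n < M
      · rw [Nat.div_eq_of_lt hn, pow_zero, mul_one]; exact hCin n hn
      · push_neg at hn
        rw [hx n hn, hy n hn]
        have hstep : ∀ i : Fin M,
            |x (n - 1 - (i : ℕ)) - y (n - 1 - (i : ℕ))| ≤ C * α ^ ((n - M) / M) := by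
          intro i
          have hi := i.isLt
          have hlt : n - 1 - (i : ℕ) < n := by omega
          refine le_trans (ih _ hlt) ?_
          refine mul_le_mul_of_nonneg_left ?_ hC0
          exact pow_le_pow_of_le_one hα0 (le_of_lt hα)
            (Nat.div_le_div_right (by omega))
        refine le_trans (hGlip n _ _ _ hstep) ?_
        have hdiv : n / M = (n - M) / M + 1 := Nat.div_eq_sub_div (by omega) hn
        rw [hdiv, pow_succ]
        ring_nf
        exact le_of_eq (by ring)
  -- particular solution y
  set y : ℕ → ℝ := sol M G with hy
  have hySol : Sol y := fun n hn => sol_spec M G n hn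
  -- shifted solutions
  have hshift : ∀ (x : ℕ → ℝ) (d : ℕ), P ∣ d → Sol x → Sol (fun n => x (n + d)) := by
    intro x d hd hx n hn
    obtain ⟨t, rfl⟩ := hd
    have h1 : M ≤ n + P * t := by omega
    have hvec : (fun i : Fin M => x (n + P * t - 1 - (i : ℕ)))
        = (fun i : Fin M => x (n - 1 - (i : ℕ) + P * t)) := by
      funext i
      have := i.isLt
      congr 1
      omega
    have hmod : (n + P * t) % P = n % P := Nat.add_mul_mod_self_left n P t
    calc x (n + P * t) = G (n + P * t) (fun i : Fin M => x (n + P * t - 1 - (i : ℕ))) :=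
          hx (n + P * t) h1
      _ = G n (fun i : Fin M => x (n - 1 - (i : ℕ) + P * t)) := by
          rw [hvec]; simp only [hG, hmod]
  -- geometric data
  set Q : ℕ := M * P with hQ
  set r : ℝ := α ^ P with hr
  have hrlt : r < 1 := pow_lt_one₀ hα0 hα (by omega)
  have hr0 : 0 ≤ r := pow_nonneg hα0 P
  have hPQ : P ∣ Q := Dvd.intro_left M rfl
  -- pairwise constants
  have pairC : ∀ (x y : ℕ → ℝ), ∃ C, 0 ≤ C ∧ ∀ m, m < M → |x m - y m| ≤ C := by
    intro x y
    refine ⟨∑ m ∈ Finset.range M, |x m - y m|, Finset.sum_nonneg (fun m _ => abs_nonneg _),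
      fun m hm => Finset.single_le_sum (f := fun m => |x m - y m|)
        (fun m _ => abs_nonneg _) (Finset.mem_range.mpr hm)⟩
  obtain ⟨CQ, hCQ0, hCQ⟩ := pairC (fun n => y (n + Q)) y
  have hyQ : ∀ n, |y (n + Q) - y n| ≤ CQ * α ^ (n / M) :=
    key _ y (hshift y Q hPQ hySol) hySol CQ hCQ0 hCQ
  -- the index arithmetic
  have hidx : ∀ n k : ℕ, α ^ ((n + k * Q) / M) = α ^ (n / M) * r ^ k := by
    intro n k
    have h1 : n + k * Q = n + M * (k * P) := by rw [hQ]; ring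
    rw [h1, Nat.add_mul_div_left n (k * P) (by omega : 0 < M), pow_add, pow_mul', hr]
  -- geometric step bound
  have hstepQ : ∀ n k, dist (y (n + k * Q)) (y (n + (k + 1) * Q)) ≤ (CQ * α ^ (n / M)) * r ^ k := by
    intro n k
    rw [Real.dist_eq]
    have h1 : n + (k + 1) * Q = (n + k * Q) + Q := by ring
    rw [h1, abs_sub_comm]
    refine le_trans (hyQ (n + k * Q)) ?_
    rw [hidx n k]
    exact le_of_eq (by ring)
  -- the limit orbit
  have hxs : ∀ n, ∃ L, Tendsto (fun k => y (n + k * Q)) atTop (nhds L) := by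
    intro n
    exact cauchySeq_tendsto_of_complete
      (cauchySeq_of_le_geometric r (CQ * α ^ (n / M)) hrlt (hstepQ n))
  choose xs hxs using hxs
  -- distance from y to the orbit
  have hdisty : ∀ n, |y n - xs n| ≤ (CQ / (1 - r)) * α ^ (n / M) := by
    intro n
    have h1 := dist_le_of_le_geometric_of_tendsto₀ r (CQ * α ^ (n / M)) hrlt (hstepQ n) (hxs n)
    simp only [Nat.zero_mul, Nat.add_zero] at h1
    rw [Real.dist_eq] at h1
    refine le_trans h1 (le_of_eq ?_)
    ring
  -- basic limit facts
  have hdivtop : Tendsto (fun n : ℕ => n / M) atTop atTop := by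
    refine Filter.tendsto_atTop_atTop.mpr (fun b => ⟨b * M, fun n hn => ?_⟩)
    exact (Nat.le_div_iff_mul_le (by omega : 0 < M)).mpr hn
  have hpow0 : Tendsto (fun n : ℕ => α ^ (n / M)) atTop (nhds 0) :=
    (tendsto_pow_atTop_nhds_zero_of_lt_one hα0 hα).comp hdivtop
  have hscaled0 : ∀ c : ℝ, Tendsto (fun n : ℕ => c * α ^ (n / M)) atTop (nhds 0) := by
    intro c
    have := hpow0.const_mul c
    simpa using this
  -- every solution converges to xs
  have hconv : ∀ x, Sol x → Tendsto (fun n => x n - xs n) atTop (nhds 0) := by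
    intro x hx
    obtain ⟨C1, hC10, hC1⟩ := pairC x y
    have hxy := key x y hx hySol C1 hC10 hC1
    have t1 : Tendsto (fun n => x n - y n) atTop (nhds 0) :=
      squeeze_zero_norm (fun n => by rw [Real.norm_eq_abs]; exact hxy n) (hscaled0 C1)
    have t2 : Tendsto (fun n => y n - xs n) atTop (nhds 0) :=
      squeeze_zero_norm (fun n => by rw [Real.norm_eq_abs]; exact hdisty n)
        (hscaled0 (CQ / (1 - r)))
    have := t1.add t2
    simpa using this
  -- periodicity
  have hper : ∀ n, xs (n + P) = xs n := by
    intro n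
    obtain ⟨CP, hCP0, hCP⟩ := pairC (fun m => y (m + P)) y
    have hyP : ∀ m, |y (m + P) - y m| ≤ CP * α ^ (m / M) :=
      key _ y (hshift y P dvd_rfl hySol) hySol CP hCP0 hCP
    have tdiff : Tendsto (fun k => y (n + k * Q + P) - y (n + k * Q)) atTop (nhds 0) := by
      refine squeeze_zero_norm (a := fun k => (CP * α ^ (n / M)) * r ^ k)
        (fun k => ?_) ?_
      · rw [Real.norm_eq_abs]
        refine le_trans (hyP (n + k * Q)) ?_
        rw [hidx n k]
        exact le_of_eq (by ring)
      · have := (tendsto_pow_atTop_nhds_zero_of_lt_one hr0 hrlt).const_mul (CP * α ^ (n / M))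
        simpa using this
    have f2 : Tendsto (fun k => y (n + P + k * Q)) atTop (nhds (xs n)) := by
      have h := (hxs n).add tdiff
      simp only [add_zero] at h
      have heq : (fun k => y (n + k * Q) + (y (n + k * Q + P) - y (n + k * Q)))
          = (fun k => y (n + P + k * Q)) := by
        funext k
        have h1 : y (n + k * Q + P) = y (n + P + k * Q) := by congr 1; omega
        rw [h1]; ring
      rwa [heq] at h
    exact tendsto_nhds_unique (hxs (n + P)) f2
  -- wrap up
  refine ⟨xs, ⟨hper, fun x hx => hconv x hx⟩, ?_⟩
  intro z hz
  have hzy : Tendsto (fun n => y n - z n) atTop (nhds 0) := hz.2 y hySol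
  have hxy : Tendsto (fun n => y n - xs n) atTop (nhds 0) := hconv y hySol
  have hdiff : Tendsto (fun n => z n - xs n) atTop (nhds 0) := by
    have := hxy.sub hzy
    simpa using this
  -- periodic extension
  have hperk : ∀ (w : ℕ → ℝ), (∀ n, w (n + P) = w n) → ∀ n k, w (n + k * P) = w n := by
    intro w hw n k
    induction k with
    | zero => simp
    | succ k ihk =>
        have : n + (k + 1) * P = (n + k * P) + P := by ring
        rw [this, hw, ihk]
    
  funext n
  have hcomp : Tendsto (fun k : ℕ => n + k * P) atTop atTop := by
    refine Filter.tendsto_atTop_atTop.mpr (fun b => ⟨b, fun k hk => ?_⟩)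
    have : k ≤ k * P := Nat.le_mul_of_pos_right k (by omega)
    omega
  have h1 : Tendsto (fun k : ℕ => z (n + k * P) - xs (n + k * P)) atTop (nhds 0) :=
    hdiff.comp hcomp
  have h2 : (fun k : ℕ => z (n + k * P) - xs (n + k * P)) = fun _ => z n - xs n := by
    funext k
    rw [hperk z hz.1 n k, hperk xs hper n k]
  rw [h2] at h1
  have h3 : z n - xs n = 0 := (tendsto_nhds_unique tendsto_const_nhds h1)
  linarith
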